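/- Let ℓ(s) = 1 + |log s| and ℓℓ(s) = 1 + log ℓ(s). For λ < 0, q ∈ [1,∞] and α, β ∈ ℝ, one has ‖s^{λ - 1/q'} ℓ(s)^{-α} ℓℓ(s)^{-β}‖_{L^{q'}(r, 1-r)} ≈ r^{λ} ℓ(r)^{-α} ℓℓ(r)^{-β} for all r ∈ (0,1/4], with constants independent of r. -/

import Mathlib

open MeasureTheory Set
open scoped ENNReal

noncomputable def ell (s : ℝ) : ℝ := 1 + |Real.log s|
noncomputable def ellell (s : ℝ) : ℝ := 1 + Real.log (ell s)

lemma ell_ge_one (s : ℝ) : 1 ≤ ell s := le_add_of_nonneg_right (abs_nonneg _)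
lemma ell_pos (s : ℝ) : 0 < ell s := lt_of_lt_of_le one_pos (ell_ge_one s)
lemma ellell_ge_one (s : ℝ) : 1 ≤ ellell s :=
  le_add_of_nonneg_right (Real.log_nonneg (ell_ge_one s))
lemma ellell_pos (s : ℝ) : 0 < ellell s := lt_of_lt_of_le one_pos (ellell_ge_one s)

lemma ell_eq {s : ℝ} (h0 : 0 < s) (h1 : s ≤ 1) : ell s = 1 - Real.log s := by
  rw [ell, abs_of_nonpos (Real.log_nonpos h0.le h1)]; ring

lemma ell_anti {r s : ℝ} (hr : 0 < r) (hrs : r ≤ s) (hs : s ≤ 1) : ell s ≤ ell r := by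
  rw [ell_eq (lt_of_lt_of_le hr hrs) hs, ell_eq hr (hrs.trans hs)]
  have := Real.log_le_log hr hrs
  linarith

lemma ellell_anti {r s : ℝ} (hr : 0 < r) (hrs : r ≤ s) (hs : s ≤ 1) : ellell s ≤ ellell r := by
  have := Real.log_le_log (ell_pos s) (ell_anti hr hrs hs)
  simp only [ellell]; linarith

lemma ellell_le_ell (s : ℝ) : ellell s ≤ ell s := by
  have := Real.log_le_sub_one_of_pos (ell_pos s)
  simp only [ellell]; linarith

lemma ell_sqrt_le {r : ℝ} (hr : 0 < r) : ell r ≤ 2 * ell (r ^ (1/2 : ℝ)) := by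
  have h : Real.log (r ^ (1/2:ℝ)) = (1/2) * Real.log r := Real.log_rpow hr _
  have : |Real.log (r ^ (1/2:ℝ))| = |Real.log r| / 2 := by
    rw [h, abs_mul]; rw [abs_of_nonneg (by norm_num : (0:ℝ) ≤ 1/2)]; ring
  simp only [ell, this]
  have := abs_nonneg (Real.log r)
  linarith

lemma ell_two_mul_le {r : ℝ} (hr : 0 < r) (hr4 : r ≤ 1/4) : ell r ≤ 2 * ell (2*r) := by
  have h2r : Real.log (2*r) = Real.log 2 + Real.log r := Real.log_mul two_ne_zero hr.ne'
  have hlr : Real.log r ≤ Real.log (1/4) := Real.log_le_log hr hr4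
  have h14 : Real.log (1/4:ℝ) = -(2 * Real.log 2) := by
    rw [show (1/4:ℝ) = (2:ℝ)^(-2:ℤ) by norm_num, Real.log_zpow]; push_cast; ring
  have hl2 : (0:ℝ) < Real.log 2 := Real.log_pos (by norm_num)
  rw [ell_eq hr (by linarith), ell_eq (by linarith) (by linarith), h2r]
  linarith

lemma ellell_half {x y : ℝ} (h : ell x ≤ 2 * ell y) : ellell x ≤ 2 * ellell y := by
  have h1 : Real.log (ell x) ≤ Real.log (2 * ell y) := Real.log_le_log (ell_pos x) h
  have h2 : Real.log (2 * ell y) = Real.log 2 + Real.log (ell y) :=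
    Real.log_mul two_ne_zero (ell_pos y).ne'
  have h3 : Real.log 2 ≤ 1 := by
    have := Real.log_le_sub_one_of_pos (by norm_num : (0:ℝ) < 2); linarith
  have h4 : 0 ≤ Real.log (ell y) := Real.log_nonneg (ell_ge_one y)
  simp only [ellell]; linarith

lemma rpow_comp_le {x y : ℝ} (hx : 0 < x) (hy : 0 < y) (hxy : x ≤ 2 * y) (hyx : y ≤ 2 * x)
    (t : ℝ) : y ^ t ≤ 2 ^ |t| * x ^ t := by
  rcases le_or_gt 0 t with ht | ht
  · rw [abs_of_nonneg ht]
    calc y ^ t ≤ (2*x) ^ t := Real.rpow_le_rpow hy.le hyx ht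
    _ = 2 ^ t * x ^ t := Real.mul_rpow (by norm_num) hx.le
  · rw [abs_of_neg ht]
    have h1 : (2*y) ^ t ≤ x ^ t := Real.rpow_le_rpow_of_nonpos hx hxy ht.le
    have h2 : (2*y) ^ t = 2 ^ t * y ^ t := Real.mul_rpow (by norm_num) hy.le
    have h3 : (0:ℝ) < 2 ^ t := Real.rpow_pos_of_pos (by norm_num) t
    have h4 : y ^ t = 2 ^ (-t) * (2 ^ t * y ^ t) := by
      rw [← mul_assoc, ← Real.rpow_add (by norm_num : (0:ℝ)<2)]; simp
    rw [h4]
    exact mul_le_mul_of_nonneg_left (h2 ▸ h1) (Real.rpow_pos_of_pos (by norm_num) _).le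
-- key boundedness lemma
lemma key_bound (ε a b : ℝ) (hε : 0 < ε) :
    ∃ K : ℝ, 0 < K ∧ ∀ s ∈ Set.Ioo (0:ℝ) 1, s ^ ε * ell s ^ a * ellell s ^ b ≤ K := by
  set c := |a| + |b| with hc
  have hc0 : 0 ≤ c := by positivity
  set δ := ε / (c + 1) with hδ
  have hδ0 : 0 < δ := by positivity
  refine ⟨(1 + 1/δ) ^ c, by positivity, ?_⟩
  rintro s ⟨hs0, hs1⟩
  have e1 : (0:ℝ) ≤ s ^ ε := (Real.rpow_pos_of_pos hs0 _).le
  have e2 : ∀ t : ℝ, (0:ℝ) ≤ ell s ^ t := fun t => (Real.rpow_pos_of_pos (ell_pos s) _).le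
  have e3 : ∀ t : ℝ, (0:ℝ) ≤ ellell s ^ t := fun t => (Real.rpow_pos_of_pos (ellell_pos s) _).le
  have hse : s ^ ε * ell s ^ a * ellell s ^ b ≤ s ^ ε * ell s ^ c := by
    have h1 : ell s ^ a ≤ ell s ^ |a| :=
      Real.rpow_le_rpow_of_exponent_le (ell_ge_one s) (le_abs_self a)
    have h2 : ellell s ^ b ≤ ell s ^ |b| :=
      le_trans (Real.rpow_le_rpow_of_exponent_le (ellell_ge_one s) (le_abs_self b))
        (Real.rpow_le_rpow (ellell_pos s).le (ellell_le_ell s) (abs_nonneg b))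
    calc s ^ ε * ell s ^ a * ellell s ^ b ≤ s ^ ε * ell s ^ |a| * ell s ^ |b| := by
          apply mul_le_mul (mul_le_mul_of_nonneg_left h1 e1) h2 (e3 b)
            (mul_nonneg e1 (e2 _))
    _ = s ^ ε * ell s ^ c := by
          rw [mul_assoc, ← Real.rpow_add (ell_pos s)]
  refine hse.trans ?_
  have hsd : (0:ℝ) < s ^ (-δ) := Real.rpow_pos_of_pos hs0 _
  have hlog : -Real.log s ≤ s ^ (-δ) / δ := by
    have h1 : Real.log (s ^ (-δ)) ≤ s ^ (-δ) - 1 :=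
      Real.log_le_sub_one_of_pos hsd
    rw [Real.log_rpow hs0] at h1
    rw [le_div_iff₀ hδ0]
    nlinarith
  have hs1' : (1:ℝ) ≤ s ^ (-δ) := by
    calc (1:ℝ) = (1:ℝ) ^ (-δ) := (Real.one_rpow _).symm
    _ ≤ s ^ (-δ) := Real.rpow_le_rpow_of_nonpos hs0 hs1.le (by linarith)
  have hell : ell s ≤ (1 + 1/δ) * s ^ (-δ) := by
    rw [ell_eq hs0 hs1.le]
    have hd : s ^ (-δ) / δ = (1/δ) * s ^ (-δ) := by ring
    nlinarith
  have h3 : ell s ^ c ≤ ((1 + 1/δ) * s ^ (-δ)) ^ c :=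
    Real.rpow_le_rpow (ell_pos s).le hell hc0
  have h4 : ((1 + 1/δ) * s ^ (-δ)) ^ c = (1 + 1/δ) ^ c * s ^ (-δ * c) := by
    rw [Real.mul_rpow (by positivity) hsd.le, ← Real.rpow_mul hs0.le]
  calc s ^ ε * ell s ^ c ≤ s ^ ε * ((1 + 1/δ) ^ c * s ^ (-δ * c)) :=
        mul_le_mul_of_nonneg_left (h3.trans (le_of_eq h4)) e1
  _ = (1 + 1/δ) ^ c * (s ^ ε * s ^ (-δ * c)) := by ring
  _ = (1 + 1/δ) ^ c * s ^ (ε + -δ * c) := by rw [← Real.rpow_add hs0]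
  _ ≤ (1 + 1/δ) ^ c * 1 := by
        refine mul_le_mul_of_nonneg_left ?_ (by positivity)
        refine Real.rpow_le_one hs0.le hs1.le ?_
        have : δ * (c + 1) = ε := by rw [hδ, div_mul_cancel₀]; positivity
        nlinarith
  _ = (1 + 1/δ) ^ c := mul_one _
lemma pointwise_bound (lam α β : ℝ) (hlam : lam < 0) :
    ∃ C : ℝ, 0 < C ∧ ∀ r ∈ Set.Ioc (0:ℝ) (1/4), ∀ s : ℝ, r < s → s < 1 →
      s ^ lam * ell s ^ (-α) * ellell s ^ (-β) ≤
        C * (r ^ lam * ell r ^ (-α) * ellell r ^ (-β)) := by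
  obtain ⟨K, hK0, hK⟩ := key_bound (-lam/2) (|α| + α) (|β| + β) (by linarith)
  refine ⟨2 ^ |α| * 2 ^ |β| + K, by positivity, ?_⟩
  rintro r ⟨hr0, hr4⟩ s hrs hs1
  have hs0 : 0 < s := hr0.trans hrs
  have hG0 : 0 < r ^ lam * ell r ^ (-α) * ellell r ^ (-β) := by
    have := Real.rpow_pos_of_pos hr0 lam
    have := Real.rpow_pos_of_pos (ell_pos r) (-α)
    have := Real.rpow_pos_of_pos (ellell_pos r) (-β)
    positivity
  set m := r ^ (1/2 : ℝ) with hm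
  have hm0 : 0 < m := Real.rpow_pos_of_pos hr0 _
  have hm1 : m ≤ 1 := Real.rpow_le_one hr0.le (by linarith) (by norm_num)
  rcases le_or_gt s m with hsm | hsm
  · -- s ≤ √r : all log factors comparable to those at r
    have hsl : s ^ lam ≤ r ^ lam := Real.rpow_le_rpow_of_nonpos hr0 hrs.le hlam.le
    have h1 : ell m ≤ ell s := ell_anti hs0 hsm hm1
    have h2 : ell s ≤ ell r := ell_anti hr0 hrs.le hs1.le
    have h3 : ell r ≤ 2 * ell s := le_trans (ell_sqrt_le hr0) (by linarith)
    have hea : ell s ^ (-α) ≤ 2 ^ |α| * ell r ^ (-α) := by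
      have := rpow_comp_le (ell_pos r) (ell_pos s) h3
        (h2.trans (by linarith [ell_pos r])) (-α)
      rwa [abs_neg] at this
    have h4 : ellell s ≤ ellell r := ellell_anti hr0 hrs.le hs1.le
    have h5 : ellell r ≤ 2 * ellell s := ellell_half h3
    have heb : ellell s ^ (-β) ≤ 2 ^ |β| * ellell r ^ (-β) := by
      have := rpow_comp_le (ellell_pos r) (ellell_pos s) h5
        (h4.trans (by linarith [ellell_pos r])) (-β)
      rwa [abs_neg] at this
    have e1 : (0:ℝ) ≤ s ^ lam := (Real.rpow_pos_of_pos hs0 _).le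
    have e2 : (0:ℝ) ≤ ell s ^ (-α) := (Real.rpow_pos_of_pos (ell_pos s) _).le
    have e3 : (0:ℝ) ≤ ellell s ^ (-β) := (Real.rpow_pos_of_pos (ellell_pos s) _).le
    have e4 : (0:ℝ) ≤ 2 ^ |α| * ell r ^ (-α) := mul_nonneg (Real.rpow_pos_of_pos two_pos _).le (Real.rpow_pos_of_pos (ell_pos r) _).le
    calc s ^ lam * ell s ^ (-α) * ellell s ^ (-β)
        ≤ r ^ lam * (2 ^ |α| * ell r ^ (-α)) * (2 ^ |β| * ellell r ^ (-β)) := by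
          exact mul_le_mul (mul_le_mul hsl hea e2 (Real.rpow_pos_of_pos hr0 _).le) heb e3
            (mul_nonneg (Real.rpow_pos_of_pos hr0 _).le e4)
    _ = (2 ^ |α| * 2 ^ |β|) * (r ^ lam * ell r ^ (-α) * ellell r ^ (-β)) := by ring
    _ ≤ (2 ^ |α| * 2 ^ |β| + K) * (r ^ lam * ell r ^ (-α) * ellell r ^ (-β)) := by
          apply mul_le_mul_of_nonneg_right _ hG0.le
          linarith
  · -- √r < s : use decay of s ^ lam
    have hsl : s ^ lam ≤ m ^ lam := Real.rpow_le_rpow_of_nonpos hm0 hsm.le hlam.le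
    have hml : m ^ lam = r ^ ((1/2) * lam) := (Real.rpow_mul hr0.le _ _).symm ▸ rfl
    have hea : ell s ^ (-α) ≤ ell r ^ |α| :=
      le_trans (Real.rpow_le_rpow_of_exponent_le (ell_ge_one s) (neg_le_abs α))
        (Real.rpow_le_rpow (ell_pos s).le (ell_anti hr0 hrs.le hs1.le) (abs_nonneg α))
    have heb : ellell s ^ (-β) ≤ ellell r ^ |β| :=
      le_trans (Real.rpow_le_rpow_of_exponent_le (ellell_ge_one s) (neg_le_abs β))
        (Real.rpow_le_rpow (ellell_pos s).le (ellell_anti hr0 hrs.le hs1.le) (abs_nonneg β))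
    have e1 : (0:ℝ) ≤ s ^ lam := (Real.rpow_pos_of_pos hs0 _).le
    have e2 : (0:ℝ) ≤ ell s ^ (-α) := (Real.rpow_pos_of_pos (ell_pos s) _).le
    have e3 : (0:ℝ) ≤ ellell s ^ (-β) := (Real.rpow_pos_of_pos (ellell_pos s) _).le
    have e5 : (0:ℝ) ≤ ell r ^ |α| := (Real.rpow_pos_of_pos (ell_pos r) _).le
    have step1 : s ^ lam * ell s ^ (-α) * ellell s ^ (-β)
        ≤ r ^ ((1/2) * lam) * ell r ^ |α| * ellell r ^ |β| := by
      rw [← hml]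
      apply mul_le_mul (mul_le_mul hsl hea e2 (Real.rpow_pos_of_pos hm0 _).le) heb e3
      positivity
    have hkey : r ^ (-lam/2) * ell r ^ (|α| + α) * ellell r ^ (|β| + β) ≤ K :=
      hK r ⟨hr0, by linarith⟩
    have split : r ^ ((1/2) * lam) * ell r ^ |α| * ellell r ^ |β|
        = (r ^ (-lam/2) * ell r ^ (|α| + α) * ellell r ^ (|β| + β))
          * (r ^ lam * ell r ^ (-α) * ellell r ^ (-β)) := by
      rw [show (r ^ (-lam/2) * ell r ^ (|α| + α) * ellell r ^ (|β| + β))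
          * (r ^ lam * ell r ^ (-α) * ellell r ^ (-β))
          = (r ^ (-lam/2) * r ^ lam) * (ell r ^ (|α| + α) * ell r ^ (-α))
            * (ellell r ^ (|β| + β) * ellell r ^ (-β)) by ring,
        ← Real.rpow_add hr0, ← Real.rpow_add (ell_pos r), ← Real.rpow_add (ellell_pos r)]
      ring_nf
    calc s ^ lam * ell s ^ (-α) * ellell s ^ (-β)
        ≤ r ^ ((1/2) * lam) * ell r ^ |α| * ellell r ^ |β| := step1
    _ = _ * _ := split
    _ ≤ K * (r ^ lam * ell r ^ (-α) * ellell r ^ (-β)) :=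
        mul_le_mul_of_nonneg_right hkey hG0.le
    _ ≤ (2 ^ |α| * 2 ^ |β| + K) * (r ^ lam * ell r ^ (-α) * ellell r ^ (-β)) := by
        apply mul_le_mul_of_nonneg_right _ hG0.le
        have : (0:ℝ) < 2 ^ |α| * 2 ^ |β| := by positivity
        linarith
lemma lower_comp (α β : ℝ) :
    ∃ c : ℝ, 0 < c ∧ ∀ r ∈ Set.Ioc (0:ℝ) (1/4), ∀ s ∈ Set.Ioo r (2*r),
      c * (ell r ^ (-α) * ellell r ^ (-β)) ≤ ell s ^ (-α) * ellell s ^ (-β) := by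
  set M := (2:ℝ) ^ |α| * 2 ^ |β| with hM
  have hM0 : 0 < M := by positivity
  refine ⟨M⁻¹, by positivity, ?_⟩
  rintro r ⟨hr0, hr4⟩ s ⟨hrs, hs2r⟩
  have hs0 : 0 < s := hr0.trans hrs
  have hs1 : s ≤ 1 := by linarith
  have h2r1 : 2 * r ≤ 1 := by linarith
  have h1 : ell (2*r) ≤ ell s := ell_anti hs0 hs2r.le h2r1
  have h2 : ell s ≤ ell r := ell_anti hr0 hrs.le hs1
  have h3 : ell r ≤ 2 * ell s := le_trans (ell_two_mul_le hr0 hr4) (by linarith)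
  have hea : ell r ^ (-α) ≤ 2 ^ |α| * ell s ^ (-α) := by
    have := rpow_comp_le (ell_pos s) (ell_pos r) (h2.trans (by linarith [ell_pos r])) h3 (-α)
    rwa [abs_neg] at this
  have h4 : ellell s ≤ ellell r := ellell_anti hr0 hrs.le hs1
  have h5 : ellell r ≤ 2 * ellell s := ellell_half h3
  have heb : ellell r ^ (-β) ≤ 2 ^ |β| * ellell s ^ (-β) := by
    have := rpow_comp_le (ellell_pos s) (ellell_pos r)
      (h4.trans (by linarith [ellell_pos r])) h5 (-β)
    rwa [abs_neg] at this
  have key : ell r ^ (-α) * ellell r ^ (-β) ≤ M * (ell s ^ (-α) * ellell s ^ (-β)) := by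
    calc ell r ^ (-α) * ellell r ^ (-β)
        ≤ (2 ^ |α| * ell s ^ (-α)) * (2 ^ |β| * ellell s ^ (-β)) := by
          exact mul_le_mul hea heb (Real.rpow_pos_of_pos (ellell_pos r) _).le
            (mul_nonneg (Real.rpow_pos_of_pos two_pos _).le
              (Real.rpow_pos_of_pos (ell_pos s) _).le)
    _ = M * (ell s ^ (-α) * ellell s ^ (-β)) := by rw [hM]; ring
  calc M⁻¹ * (ell r ^ (-α) * ellell r ^ (-β))
      ≤ M⁻¹ * (M * (ell s ^ (-α) * ellell s ^ (-β))) :=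
        mul_le_mul_of_nonneg_left key (by positivity)
  _ = ell s ^ (-α) * ellell s ^ (-β) := by field_simp

lemma rpow_G {r p : ℝ} (lam α β : ℝ) (hr : 0 < r) (hp : 0 < p) {D : ℝ} (hD : 0 ≤ D) :
    (D * (r ^ (lam * p) * ell r ^ (-(α * p)) * ellell r ^ (-(β * p)))) ^ (1/p)
      = D ^ (1/p) * (r ^ lam * ell r ^ (-α) * ellell r ^ (-β)) := by
  have e1 : (0:ℝ) ≤ r ^ (lam * p) := (Real.rpow_pos_of_pos hr _).le
  have e2 : (0:ℝ) ≤ ell r ^ (-(α * p)) := (Real.rpow_pos_of_pos (ell_pos r) _).le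
  have e3 : (0:ℝ) ≤ ellell r ^ (-(β * p)) := (Real.rpow_pos_of_pos (ellell_pos r) _).le
  rw [Real.mul_rpow hD (by positivity), Real.mul_rpow (mul_nonneg e1 e2) e3,
    Real.mul_rpow e1 e2, ← Real.rpow_mul hr.le, ← Real.rpow_mul (ell_pos r).le,
    ← Real.rpow_mul (ellell_pos r).le]
  have c1 : lam * p * (1/p) = lam := by field_simp
  have c2 : -(α * p) * (1/p) = -α := by field_simp
  have c3 : -(β * p) * (1/p) = -β := by field_simp
  rw [c1, c2, c3]

/-- For `λ < 0`: `‖s^{λ-1/q'} ℓ(s)^{-α} ℓℓ(s)^{-β}‖_{L^{q'}(r,1-r)} ≈ r^λ ℓ(r)^{-α} ℓℓ(r)^{-β}`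
for all `r ∈ (0,1/4]`, with constants independent of `r`. -/
theorem stmt11 (q q' : ℝ≥0∞) (hq : 1 ≤ q) (hconj : 1 / q + 1 / q' = 1)
    (α β lam : ℝ) (hlam : lam < 0) :
    ∃ c C : ℝ, 0 < c ∧ 0 < C ∧
      ∀ r ∈ Set.Ioc (0 : ℝ) (1 / 4),
        ENNReal.ofReal (c * (r ^ lam * ell r ^ (-α) * ellell r ^ (-β))) ≤
            eLpNorm (fun s : ℝ => s ^ (lam - (1 / q').toReal) * ell s ^ (-α) * ellell s ^ (-β))
              q' (volume.restrict (Set.Ioo r (1 - r))) ∧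
          eLpNorm (fun s : ℝ => s ^ (lam - (1 / q').toReal) * ell s ^ (-α) * ellell s ^ (-β))
              q' (volume.restrict (Set.Ioo r (1 - r))) ≤
            ENNReal.ofReal (C * (r ^ lam * ell r ^ (-α) * ellell r ^ (-β))) := by
  have hq'0 : q' ≠ 0 := by
    intro h
    rw [h] at hconj
    simp [ENNReal.div_zero] at hconj
  by_cases htop : q' = ⊤
  · subst htop
    simp only [ENNReal.div_top, ENNReal.toReal_zero, sub_zero]
    obtain ⟨C₁, hC₁, hP⟩ := pointwise_bound lam α β hlam
    obtain ⟨c₀, hc₀, hL⟩ := lower_comp α β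
    refine ⟨2 ^ lam * c₀, C₁, by positivity, hC₁, ?_⟩
    rintro r ⟨hr0, hr4⟩
    have hGpos : 0 < r ^ lam * ell r ^ (-α) * ellell r ^ (-β) := by
      have := Real.rpow_pos_of_pos hr0 lam
      have := Real.rpow_pos_of_pos (ell_pos r) (-α)
      have := Real.rpow_pos_of_pos (ellell_pos r) (-β)
      positivity
    have fnonneg : ∀ s : ℝ, 0 < s → 0 ≤ s ^ lam * ell s ^ (-α) * ellell s ^ (-β) := by
      intro s hs
      have := Real.rpow_pos_of_pos hs lam
      have := Real.rpow_pos_of_pos (ell_pos s) (-α)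
      have := Real.rpow_pos_of_pos (ellell_pos s) (-β)
      positivity
    constructor
    · -- lower bound
      have sub : Set.Ioo r (2*r) ⊆ Set.Ioo r (1-r) := by
        rintro x ⟨h1, h2⟩; exact ⟨h1, by linarith⟩
      refine le_trans ?_
        (eLpNorm_mono_measure _ (Measure.restrict_mono sub le_rfl))
      rw [eLpNorm_exponent_top]
      have hμ : volume.restrict (Set.Ioo r (2*r)) ≠ 0 := by
        intro h
        rw [Measure.restrict_eq_zero, Real.volume_Ioo, ENNReal.ofReal_eq_zero] at h
        linarith
      have hae : (fun _ : ℝ => ENNReal.ofReal (2 ^ lam * c₀ *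
            (r ^ lam * ell r ^ (-α) * ellell r ^ (-β))))
          ≤ᶠ[MeasureTheory.ae (volume.restrict (Set.Ioo r (2*r)))]
          fun s => (‖s ^ lam * ell s ^ (-α) * ellell s ^ (-β)‖₊ : ℝ≥0∞) := by
        rw [Filter.EventuallyLE, ae_restrict_iff' measurableSet_Ioo]
        refine ae_of_all _ (fun s hs => ?_)
        obtain ⟨hrs, hs2r⟩ := hs
        have hs0 : 0 < s := hr0.trans hrs
        change _ ≤ ‖s ^ lam * ell s ^ (-α) * ellell s ^ (-β)‖ₑ
        rw [Real.enorm_eq_ofReal (fnonneg s hs0)]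
        apply ENNReal.ofReal_le_ofReal
        have h1 : (2:ℝ) ^ lam * r ^ lam ≤ s ^ lam := by
          have h2 : ((2*r):ℝ) ^ lam ≤ s ^ lam :=
            Real.rpow_le_rpow_of_nonpos hs0 hs2r.le hlam.le
          rwa [Real.mul_rpow (by norm_num) hr0.le] at h2
        have h2 : c₀ * (ell r ^ (-α) * ellell r ^ (-β)) ≤ ell s ^ (-α) * ellell s ^ (-β) :=
          hL r ⟨hr0, hr4⟩ s ⟨hrs, hs2r⟩
        calc 2 ^ lam * c₀ * (r ^ lam * ell r ^ (-α) * ellell r ^ (-β))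
            = (2 ^ lam * r ^ lam) * (c₀ * (ell r ^ (-α) * ellell r ^ (-β))) := by ring
        _ ≤ s ^ lam * (ell s ^ (-α) * ellell s ^ (-β)) := by
            apply mul_le_mul h1 h2
            · exact mul_nonneg hc₀.le (mul_nonneg (Real.rpow_pos_of_pos (ell_pos r) _).le
                (Real.rpow_pos_of_pos (ellell_pos r) _).le)
            · exact (Real.rpow_pos_of_pos hs0 _).le
        _ = s ^ lam * ell s ^ (-α) * ellell s ^ (-β) := by ring
      calc ENNReal.ofReal (2 ^ lam * c₀ * (r ^ lam * ell r ^ (-α) * ellell r ^ (-β)))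
          = essSup (fun _ : ℝ => ENNReal.ofReal (2 ^ lam * c₀ *
              (r ^ lam * ell r ^ (-α) * ellell r ^ (-β))))
              (volume.restrict (Set.Ioo r (2*r))) := (essSup_const _ hμ).symm
      _ ≤ essSup (fun s : ℝ => (‖s ^ lam * ell s ^ (-α) * ellell s ^ (-β)‖₊ : ℝ≥0∞))
              (volume.restrict (Set.Ioo r (2*r))) := essSup_mono_ae hae
      _ = eLpNormEssSup (fun s : ℝ => s ^ lam * ell s ^ (-α) * ellell s ^ (-β))
              (volume.restrict (Set.Ioo r (2*r))) := rfl
    · -- upper bound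
      rw [eLpNorm_exponent_top]
      apply eLpNormEssSup_le_of_ae_bound
        (C := C₁ * (r ^ lam * ell r ^ (-α) * ellell r ^ (-β)))
      rw [ae_restrict_iff' measurableSet_Ioo]
      refine ae_of_all _ (fun s hs => ?_)
      obtain ⟨hrs, hs1r⟩ := hs
      have hs0 : 0 < s := hr0.trans hrs
      rw [Real.norm_eq_abs, abs_of_nonneg (fnonneg s hs0)]
      exact hP r ⟨hr0, hr4⟩ s hrs (by linarith)
  · -- q' finite
    set p := q'.toReal with hp
    have hp0 : 0 < p := ENNReal.toReal_pos hq'0 htop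
    have hdiv : (1 / q').toReal = 1 / p := by
      rw [ENNReal.toReal_div, ENNReal.toReal_one]
    rw [hdiv]
    have hlp : lam * p < 0 := mul_neg_of_neg_of_pos hlam hp0
    obtain ⟨C₁, hC₁, hP⟩ := pointwise_bound (lam * p / 2) (α * p) (β * p) (by linarith)
    obtain ⟨c₀, hc₀, hL⟩ := lower_comp (α * p) (β * p)
    set c₂ : ℝ := -2 / (lam * p) with hc₂
    have hc₂0 : 0 < c₂ := div_pos_iff.2 (Or.inr ⟨by norm_num, hlp⟩)
    have hD1 : (0:ℝ) < 2 ^ (lam * p - 1) * c₀ :=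
      mul_pos (Real.rpow_pos_of_pos two_pos _) hc₀
    have hD2 : (0:ℝ) < C₁ * c₂ := mul_pos hC₁ hc₂0
    refine ⟨(2 ^ (lam * p - 1) * c₀) ^ (1/p), (C₁ * c₂) ^ (1/p),
      Real.rpow_pos_of_pos hD1 _, Real.rpow_pos_of_pos hD2 _, ?_⟩
    rintro r ⟨hr0, hr4⟩
    have fnonneg : ∀ s : ℝ, 0 < s → ∀ t u v : ℝ,
        0 ≤ s ^ t * ell s ^ u * ellell s ^ v := by
      intro s hs t u v
      exact mul_nonneg (mul_nonneg (Real.rpow_pos_of_pos hs _).le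
        (Real.rpow_pos_of_pos (ell_pos s) _).le) (Real.rpow_pos_of_pos (ellell_pos s) _).le
    -- rewrite the eLpNorm as a lintegral of ofReal g
    rw [eLpNorm_eq_lintegral_rpow_enorm_toReal hq'0 htop]
    have hint : ∫⁻ s in Set.Ioo r (1-r),
          ‖s ^ (lam - 1/p) * ell s ^ (-α) * ellell s ^ (-β)‖ₑ ^ p
        = ∫⁻ s in Set.Ioo r (1-r),
          ENNReal.ofReal (s ^ (lam*p - 1) * ell s ^ (-(α*p)) * ellell s ^ (-(β*p))) := by
      apply setLIntegral_congr_fun measurableSet_Ioo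
      intro s hs
      dsimp only
      have hs0 : 0 < s := hr0.trans hs.1
      have hf0 : 0 ≤ s ^ (lam - 1/p) * ell s ^ (-α) * ellell s ^ (-β) := fnonneg s hs0 _ _ _
      rw [Real.enorm_eq_ofReal hf0, ENNReal.ofReal_rpow_of_nonneg hf0 hp0.le]
      congr 1
      rw [Real.mul_rpow (mul_nonneg (Real.rpow_pos_of_pos hs0 _).le
            (Real.rpow_pos_of_pos (ell_pos s) _).le) (Real.rpow_pos_of_pos (ellell_pos s) _).le,
        Real.mul_rpow (Real.rpow_pos_of_pos hs0 _).le (Real.rpow_pos_of_pos (ell_pos s) _).le,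
        ← Real.rpow_mul hs0.le, ← Real.rpow_mul (ell_pos s).le,
        ← Real.rpow_mul (ellell_pos s).le]
      have e1 : (lam - 1/p) * p = lam * p - 1 := by field_simp
      have e2 : -α * p = -(α*p) := by ring
      have e3 : -β * p = -(β*p) := by ring
      rw [e1, e2, e3]
    rw [hp] at hint ⊢
    rw [hint]
    have hGpos : 0 < r ^ lam * ell r ^ (-α) * ellell r ^ (-β) := by
      have h1 := Real.rpow_pos_of_pos hr0 lam
      have h2 := Real.rpow_pos_of_pos (ell_pos r) (-α)
      have h3 := Real.rpow_pos_of_pos (ellell_pos r) (-β)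
      positivity
    set Gp : ℝ := r ^ (lam*p/2) * ell r ^ (-(α*p)) * ellell r ^ (-(β*p)) with hGp
    have hGppos : 0 < Gp := by
      have h1 := Real.rpow_pos_of_pos hr0 (lam*p/2)
      have h2 := Real.rpow_pos_of_pos (ell_pos r) (-(α*p))
      have h3 := Real.rpow_pos_of_pos (ellell_pos r) (-(β*p))
      positivity
    constructor
    · -- LOWER BOUND
      have sub : Set.Ioo r (2*r) ⊆ Set.Ioo r (1-r) := by
        rintro x ⟨h1, h2⟩; exact ⟨h1, by linarith⟩
      set m : ℝ := 2 ^ (lam*p-1) * r ^ (lam*p-1) *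
        (c₀ * (ell r ^ (-(α*p)) * ellell r ^ (-(β*p)))) with hm
      have step1 : ENNReal.ofReal (m * r) ≤
          ∫⁻ s in Set.Ioo r (2*r),
            ENNReal.ofReal (s ^ (lam*p - 1) * ell s ^ (-(α*p)) * ellell s ^ (-(β*p))) := by
        have hvol : ∫⁻ _ in Set.Ioo r (2*r), ENNReal.ofReal m = ENNReal.ofReal (m * r) := by
          rw [setLIntegral_const, Real.volume_Ioo, ← ENNReal.ofReal_mul' (by linarith)]
          congr 1; ring
        rw [← hvol]
        apply lintegral_mono_ae
        rw [ae_restrict_iff' measurableSet_Ioo]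
        refine ae_of_all _ (fun s hs => ?_)
        obtain ⟨hrs, hs2r⟩ := hs
        have hs0 : 0 < s := hr0.trans hrs
        apply ENNReal.ofReal_le_ofReal
        have h1 : (2:ℝ) ^ (lam*p-1) * r ^ (lam*p-1) ≤ s ^ (lam*p-1) := by
          have h2 : ((2*r):ℝ) ^ (lam*p-1) ≤ s ^ (lam*p-1) :=
            Real.rpow_le_rpow_of_nonpos hs0 hs2r.le (by linarith)
          rwa [Real.mul_rpow (by norm_num) hr0.le] at h2
        have h2 : c₀ * (ell r ^ (-(α*p)) * ellell r ^ (-(β*p))) ≤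
            ell s ^ (-(α*p)) * ellell s ^ (-(β*p)) := hL r ⟨hr0, hr4⟩ s ⟨hrs, hs2r⟩
        calc m = (2 ^ (lam*p-1) * r ^ (lam*p-1)) *
              (c₀ * (ell r ^ (-(α*p)) * ellell r ^ (-(β*p)))) := by rw [hm]
        _ ≤ s ^ (lam*p-1) * (ell s ^ (-(α*p)) * ellell s ^ (-(β*p))) := by
            apply mul_le_mul h1 h2
            · exact mul_nonneg hc₀.le (mul_nonneg (Real.rpow_pos_of_pos (ell_pos r) _).le
                (Real.rpow_pos_of_pos (ellell_pos r) _).le)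
            · exact (Real.rpow_pos_of_pos hs0 _).le
        _ = s ^ (lam*p - 1) * ell s ^ (-(α*p)) * ellell s ^ (-(β*p)) := by ring
      have step2 : ∫⁻ s in Set.Ioo r (2*r),
            ENNReal.ofReal (s ^ (lam*p - 1) * ell s ^ (-(α*p)) * ellell s ^ (-(β*p)))
          ≤ ∫⁻ s in Set.Ioo r (1-r),
            ENNReal.ofReal (s ^ (lam*p - 1) * ell s ^ (-(α*p)) * ellell s ^ (-(β*p))) :=
        lintegral_mono' (Measure.restrict_mono sub le_rfl) le_rfl
      have hmr : m * r = (2 ^ (lam*p-1) * c₀) *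
          (r ^ (lam*p) * ell r ^ (-(α*p)) * ellell r ^ (-(β*p))) := by
        have : r ^ (lam*p-1) * r = r ^ (lam*p) := by
          rw [← Real.rpow_add_one hr0.ne']; ring_nf
        rw [hm, ← this]; ring
      have hfinal : ENNReal.ofReal ((2 ^ (lam*p-1) * c₀) ^ (1/p) *
          (r ^ lam * ell r ^ (-α) * ellell r ^ (-β))) ≤
          (∫⁻ s in Set.Ioo r (1-r),
            ENNReal.ofReal (s ^ (lam*p - 1) * ell s ^ (-(α*p)) * ellell s ^ (-(β*p)))) ^ (1/p) := by
        have hBp : 0 ≤ r ^ (lam*p) * ell r ^ (-(α*p)) * ellell r ^ (-(β*p)) :=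
          fnonneg r hr0 _ _ _
        rw [← rpow_G lam α β hr0 hp0 hD1.le]
        rw [← ENNReal.ofReal_rpow_of_nonneg (mul_nonneg hD1.le hBp) (by positivity)]
        apply ENNReal.rpow_le_rpow _ (by positivity)
        rw [← hmr]
        exact step1.trans step2
      exact hfinal
    · -- UPPER BOUND
      have pbound : ∀ s ∈ Set.Ioo r (1-r),
          s ^ (lam*p - 1) * ell s ^ (-(α*p)) * ellell s ^ (-(β*p))
            ≤ (C₁ * Gp) * s ^ (lam*p/2 - 1) := by
        rintro s ⟨hrs, hs1r⟩
        have hs0 : 0 < s := hr0.trans hrs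
        have hsplit : s ^ (lam*p - 1) = s ^ (lam*p/2 - 1) * s ^ (lam*p/2) := by
          rw [← Real.rpow_add hs0]; ring_nf
        have hpb : s ^ (lam*p/2) * ell s ^ (-(α*p)) * ellell s ^ (-(β*p)) ≤ C₁ * Gp :=
          hP r ⟨hr0, hr4⟩ s hrs (by linarith)
        calc s ^ (lam*p - 1) * ell s ^ (-(α*p)) * ellell s ^ (-(β*p))
            = (s ^ (lam*p/2) * ell s ^ (-(α*p)) * ellell s ^ (-(β*p))) * s ^ (lam*p/2 - 1) := by
              rw [hsplit]; ring
        _ ≤ (C₁ * Gp) * s ^ (lam*p/2 - 1) :=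
              mul_le_mul_of_nonneg_right hpb (Real.rpow_pos_of_pos hs0 _).le
      have hν : lam*p/2 - 1 < -1 := by linarith
      have hintg : IntegrableOn (fun t : ℝ => t ^ (lam*p/2 - 1)) (Set.Ioi r) :=
        integrableOn_Ioi_rpow_of_lt hν hr0
      have hIoi : ∫⁻ s in Set.Ioi r, ENNReal.ofReal (s ^ (lam*p/2 - 1))
          = ENNReal.ofReal (r ^ (lam*p/2) * c₂) := by
        rw [← MeasureTheory.ofReal_integral_eq_lintegral_ofReal hintg ?hnn]
        case hnn =>
          rw [Filter.EventuallyLE, ae_restrict_iff' measurableSet_Ioi]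
          refine ae_of_all _ (fun s hs => ?_)
          simpa using (Real.rpow_pos_of_pos (hr0.trans hs) (lam*p/2 - 1)).le
        congr 1
        rw [integral_Ioi_rpow_of_lt hν hr0]
        have h1 : lam*p/2 - 1 + 1 = lam*p/2 := by ring
        rw [h1, hc₂]
        field_simp
      have step : ∫⁻ s in Set.Ioo r (1-r),
            ENNReal.ofReal (s ^ (lam*p - 1) * ell s ^ (-(α*p)) * ellell s ^ (-(β*p)))
          ≤ ENNReal.ofReal ((C₁ * c₂) * (r ^ (lam*p) * ell r ^ (-(α*p)) * ellell r ^ (-(β*p)))) := by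
        calc ∫⁻ s in Set.Ioo r (1-r),
              ENNReal.ofReal (s ^ (lam*p - 1) * ell s ^ (-(α*p)) * ellell s ^ (-(β*p)))
            ≤ ∫⁻ s in Set.Ioo r (1-r), ENNReal.ofReal ((C₁ * Gp) * s ^ (lam*p/2 - 1)) := by
              apply lintegral_mono_ae
              rw [ae_restrict_iff' measurableSet_Ioo]
              exact ae_of_all _ (fun s hs => ENNReal.ofReal_le_ofReal (pbound s hs))
        _ = ENNReal.ofReal (C₁ * Gp) * ∫⁻ s in Set.Ioo r (1-r), ENNReal.ofReal (s ^ (lam*p/2 - 1)) := by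
              rw [← lintegral_const_mul' _ _ ENNReal.ofReal_ne_top]
              congr 1
              ext s
              rw [← ENNReal.ofReal_mul (by positivity)]
        _ ≤ ENNReal.ofReal (C₁ * Gp) * ∫⁻ s in Set.Ioi r, ENNReal.ofReal (s ^ (lam*p/2 - 1)) := by
              apply mul_le_mul_right
              exact lintegral_mono' (Measure.restrict_mono (fun x hx => hx.1) le_rfl) le_rfl
        _ = ENNReal.ofReal (C₁ * Gp) * ENNReal.ofReal (r ^ (lam*p/2) * c₂) := by rw [hIoi]
        _ = ENNReal.ofReal ((C₁ * c₂) * (r ^ (lam*p) * ell r ^ (-(α*p)) * ellell r ^ (-(β*p)))) := by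
              rw [← ENNReal.ofReal_mul (by positivity)]
              congr 1
              have hrr : r ^ (lam*p/2) * r ^ (lam*p/2) = r ^ (lam*p) := by
                rw [← Real.rpow_add hr0]; ring_nf
              rw [hGp, ← hrr]; ring
      calc (∫⁻ s in Set.Ioo r (1-r),
            ENNReal.ofReal (s ^ (lam*p - 1) * ell s ^ (-(α*p)) * ellell s ^ (-(β*p)))) ^ (1/p)
          ≤ (ENNReal.ofReal ((C₁ * c₂) *
              (r ^ (lam*p) * ell r ^ (-(α*p)) * ellell r ^ (-(β*p))))) ^ (1/p) :=
            ENNReal.rpow_le_rpow step (by positivity)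
      _ = ENNReal.ofReal (((C₁ * c₂) *
              (r ^ (lam*p) * ell r ^ (-(α*p)) * ellell r ^ (-(β*p)))) ^ (1/p)) := by
            rw [ENNReal.ofReal_rpow_of_nonneg
              (mul_nonneg hD2.le (fnonneg r hr0 _ _ _)) (by positivity)]
      _ = ENNReal.ofReal ((C₁ * c₂) ^ (1/p) * (r ^ lam * ell r ^ (-α) * ellell r ^ (-β))) := by
            rw [rpow_G lam α β hr0 hp0 hD2.le]
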